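/- Suppose p_i(0) ∈ (0,1) for all i ∈ V, and let A_1, A_2, …, A_d ⊆ V be sets such that: (i) A_1 is a robust polarized cluster with q_i(0) = 0 for every i ∈ A_1; (ii) for every h ∈ {1,…,d−1} and every i ∈ A_{h+1}, |N_i ∩ A_h| > |N_i \ A_h|. Then for every h ∈ {1,…,d} there exists T_h ∈ ℕ (with T_1 = 0) such that q_i(k) = 0 for all k ≥ T_h and all i ∈ A_h. Consequently, limsup_{k→∞} p_i(k) ≤ 1/2 for every i ∈ A_1 ∪ … ∪ A_d. -/

import Mathlib

/- Auxiliary real-arithmetic lemmas for the CODA update map. -/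
private lemma coda_lt_half (x u : ℝ) (h0 : 0 < x) (h2 : x < 1/2) (hu : u ≤ 1/2 - x) :
    x + x * (1 - x) * u < 1/2 := by
  have h1 : (0:ℝ) < 1 - x := by linarith
  have hx : x * (1 - x) * u ≤ x * (1 - x) * (1/2 - x) :=
    mul_le_mul_of_nonneg_left hu (by positivity)
  nlinarith [mul_pos (by linarith : (0:ℝ) < 1/2 - x) (by nlinarith : (0:ℝ) < 1 - x * (1 - x))]

private lemma coda_decay (x u ε : ℝ) (h2 : 1/2 ≤ x) (h1 : x < 1) (hε : 0 < ε)
    (hu : u ≤ 1/2 - ε - x) :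
    x + x * (1 - x) * u ≤ x - ε/2 * (1 - x) := by
  have hx : x * (1 - x) * u ≤ x * (1 - x) * (1/2 - ε - x) :=
    mul_le_mul_of_nonneg_left hu (by nlinarith)
  nlinarith [mul_nonneg (by linarith : (0:ℝ) ≤ 1 - x)
    (by nlinarith : (0:ℝ) ≤ -(x * (1/2 - x) + ε * (1/2 - x)))]

/-- CODA model, diffusion of actions: if `A 1` is a robust polarized cluster with
initial action `0`, and each agent of `A (h+1)` has strictly more neighbors in `A h`
than outside it (for `1 ≤ h ≤ d-1`), then each `A h` eventually adopts action `0`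
forever (with `T_1 = 0`), and the opinions of all agents in `A 1 ∪ … ∪ A d` have
`limsup ≤ 1/2`. -/
theorem stmt_12
    (n : ℕ) (N : Fin n → Finset (Fin n))
    (hdeg : ∀ i, 1 ≤ (N i).card)
    (p : Fin n → ℕ → ℝ) (q : Fin n → ℕ → ℕ)
    (hq0 : ∀ i k, (p i k < 1 / 2 ∨ (p i k = 1 / 2 ∧ p i (k - 1) < 1 / 2)) → q i k = 0)
    (hq1 : ∀ i k, ¬(p i k < 1 / 2 ∨ (p i k = 1 / 2 ∧ p i (k - 1) < 1 / 2)) → q i k = 1)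
    (hupd : ∀ i k, p i (k + 1) =
      p i k + p i k * (1 - p i k) / (N i).card * ∑ j ∈ N i, ((q j k : ℝ) - p i k))
    (hp0 : ∀ i, p i 0 ∈ Set.Ioo (0 : ℝ) 1)
    (d : ℕ) (hd : 1 ≤ d) (A : ℕ → Finset (Fin n))
    (hA1zero : ∀ i ∈ A 1, q i 0 = 0)
    (hA1rob : ∀ i ∈ A 1, (N i \ A 1).card ≤ ((N i) ∩ A 1).card)
    (hdiff : ∀ h : ℕ, 1 ≤ h → h ≤ d - 1 →
      ∀ i ∈ A (h + 1), (N i \ A h).card < ((N i) ∩ A h).card) :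
    (∀ h : ℕ, 1 ≤ h → h ≤ d →
      ∃ T : ℕ, (h = 1 → T = 0) ∧ ∀ k ≥ T, ∀ i ∈ A h, q i k = 0) ∧
    (∀ i : Fin n, (∃ h : ℕ, 1 ≤ h ∧ h ≤ d ∧ i ∈ A h) →
      Filter.limsup (fun k => p i k) Filter.atTop ≤ 1 / 2) := by
  -- q is always 0 or 1
  have hqle : ∀ i k, q i k ≤ 1 := by
    intro i k
    by_cases h : (p i k < 1 / 2 ∨ (p i k = 1 / 2 ∧ p i (k - 1) < 1 / 2))
    · rw [hq0 i k h]; omega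
    · rw [hq1 i k h]
  -- opinions stay in (0,1)
  have hncard : ∀ i, (0:ℝ) < (N i).card := by
    intro i; exact_mod_cast Nat.lt_of_lt_of_le Nat.zero_lt_one (hdeg i)
  have hmem : ∀ i k, 0 < p i k ∧ p i k < 1 := by
    intro i k
    induction k with
    | zero => exact ⟨(hp0 i).1, (hp0 i).2⟩
    | succ k ih =>
      obtain ⟨h0, h1⟩ := ih
      have hn := hncard i
      have hsum_le : ∑ j ∈ N i, ((q j k : ℝ) - p i k) ≤ (N i).card * (1 - p i k) := by
        calc ∑ j ∈ N i, ((q j k : ℝ) - p i k) ≤ ∑ _j ∈ N i, (1 - p i k) :=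
              Finset.sum_le_sum (fun j _ => by
                have : (q j k : ℝ) ≤ 1 := by exact_mod_cast hqle j k
                linarith)
          _ = (N i).card * (1 - p i k) := by rw [Finset.sum_const, nsmul_eq_mul]
      have hsum_ge : (N i).card * (0 - p i k) ≤ ∑ j ∈ N i, ((q j k : ℝ) - p i k) := by
        calc ((N i).card : ℝ) * (0 - p i k) = ∑ _j ∈ N i, (0 - p i k) := by
              rw [Finset.sum_const, nsmul_eq_mul]
          _ ≤ ∑ j ∈ N i, ((q j k : ℝ) - p i k) :=
              Finset.sum_le_sum (fun j _ => by
                have : (0:ℝ) ≤ (q j k : ℝ) := Nat.cast_nonneg _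
                linarith)
      rw [hupd i k]
      set S := ∑ j ∈ N i, ((q j k : ℝ) - p i k) with hS
      have hrw : p i k * (1 - p i k) / (N i).card * S = p i k * (1 - p i k) * (S / (N i).card) := by
        ring
      have hu1 : S / (N i).card ≤ 1 - p i k := by
        rw [div_le_iff₀ hn]; linarith [hsum_le]
      have hu2 : 0 - p i k ≤ S / (N i).card := by
        rw [le_div_iff₀ hn]; linarith [hsum_ge]
      rw [hrw]
      set u := S / (N i).card
      constructor
      · nlinarith [mul_pos h0 (by linarith : (0:ℝ) < 1 - p i k)]
      · nlinarith [mul_pos h0 (by linarith : (0:ℝ) < 1 - p i k)]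
  -- general step rewrite: p(k+1) = p + p(1-p) * u with bounds on u from counting
  have hsum_count : ∀ i k (B : Finset (Fin n)),
      (∀ j ∈ N i ∩ B, q j k = 0) →
      (∑ j ∈ N i, q j k) ≤ (N i \ B).card := by
    intro i k B hz
    have : ∑ j ∈ N i, q j k = ∑ j ∈ N i ∩ B, q j k + ∑ j ∈ N i \ B, q j k :=
      (Finset.sum_inter_add_sum_sdiff (N i) B _).symm
    rw [this, Finset.sum_eq_zero hz, zero_add]
    calc ∑ j ∈ N i \ B, q j k ≤ ∑ _j ∈ N i \ B, 1 :=
          Finset.sum_le_sum (fun j _ => hqle j k)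
      _ = (N i \ B).card := by simp
  -- key step: if p < 1/2 and at most half neighbors say 1, then p stays < 1/2
  have key_lt : ∀ i k, p i k < 1/2 → 2 * (∑ j ∈ N i, q j k) ≤ (N i).card →
      p i (k+1) < 1/2 := by
    intro i k hp hcount
    have hn := hncard i
    rw [hupd i k]
    have hSle : ∑ j ∈ N i, ((q j k : ℝ) - p i k) ≤ (N i).card * (1/2 - p i k) := by
      have h1 : ∑ j ∈ N i, ((q j k : ℝ) - p i k)
          = (∑ j ∈ N i, (q j k : ℝ)) - (N i).card * p i k := by
        rw [Finset.sum_sub_distrib, Finset.sum_const, nsmul_eq_mul]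
      have h2 : (∑ j ∈ N i, (q j k : ℝ)) ≤ (N i).card / 2 := by
        have : ((2 * ∑ j ∈ N i, q j k : ℕ) : ℝ) ≤ ((N i).card : ℝ) := by
          exact_mod_cast hcount
        push_cast at this
        linarith
      rw [h1]; linarith
    have hrw : p i k * (1 - p i k) / (N i).card * (∑ j ∈ N i, ((q j k : ℝ) - p i k))
        = p i k * (1 - p i k) * ((∑ j ∈ N i, ((q j k : ℝ) - p i k)) / (N i).card) := by ring
    rw [hrw]
    exact coda_lt_half _ _ (hmem i k).1 hp (by rw [div_le_iff₀ hn]; linarith)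
  -- key decay: if p ≥ 1/2 and strictly fewer than half neighbors say 1, p decreases
  have key_dec : ∀ i k, 1/2 ≤ p i k → 2 * (∑ j ∈ N i, q j k) + 1 ≤ (N i).card →
      p i (k+1) ≤ p i k - (1/(2*(N i).card))/2 * (1 - p i k) := by
    intro i k hp hcount
    have hn := hncard i
    rw [hupd i k]
    have hSle : ∑ j ∈ N i, ((q j k : ℝ) - p i k)
        ≤ (N i).card * (1/2 - 1/(2*(N i).card) - p i k) := by
      have h1 : ∑ j ∈ N i, ((q j k : ℝ) - p i k)
          = (∑ j ∈ N i, (q j k : ℝ)) - (N i).card * p i k := by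
        rw [Finset.sum_sub_distrib, Finset.sum_const, nsmul_eq_mul]
      have h2 : (∑ j ∈ N i, (q j k : ℝ)) ≤ ((N i).card - 1) / 2 := by
        have : ((2 * ∑ j ∈ N i, q j k + 1 : ℕ) : ℝ) ≤ ((N i).card : ℝ) := by
          exact_mod_cast hcount
        push_cast at this
        linarith
      have h3 : ((N i).card:ℝ) * (1/2 - 1/(2*(N i).card) - p i k)
          = ((N i).card - 1)/2 - (N i).card * p i k := by
        field_simp
      rw [h1, h3]; linarith
    have hrw : p i k * (1 - p i k) / (N i).card * (∑ j ∈ N i, ((q j k : ℝ) - p i k))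
        = p i k * (1 - p i k) * ((∑ j ∈ N i, ((q j k : ℝ) - p i k)) / (N i).card) := by ring
    rw [hrw]
    exact coda_decay _ _ _ hp (hmem i k).2 (by positivity)
      (by rw [div_le_iff₀ hn]; linarith)
  -- per-agent: if from time T on, strictly fewer than half of i's neighbors say 1,
  -- then eventually p i k < 1/2 forever
  have per_agent : ∀ (i : Fin n) (T : ℕ),
      (∀ k, T ≤ k → 2 * (∑ j ∈ N i, q j k) + 1 ≤ (N i).card) →
      ∃ T', ∀ k, T' ≤ k → p i k < 1/2 := by
    intro i T hcnt
    -- once below 1/2, stays below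
    have stays : ∀ k, T ≤ k → p i k < 1/2 → ∀ m, k ≤ m → p i m < 1/2 := by
      intro k hk hpk m hm
      induction m with
      | zero =>
        have hk0 : k = 0 := Nat.le_zero.mp hm
        subst hk0; exact hpk
      | succ m ih =>
        rcases Nat.lt_or_ge k (m+1) with h | h
        · have hm' : k ≤ m := by omega
          have hpm := ih hm'
          exact key_lt i m hpm (by have := hcnt m (by omega); omega)
        · have : k = m + 1 := by omega
          rw [← this]; exact hpk
    by_cases hex : ∃ k, T ≤ k ∧ p i k < 1/2
    · obtain ⟨k, hk, hpk⟩ := hex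
      exact ⟨k, fun m hm => stays k hk hpk m hm⟩
    · exfalso
      push_neg at hex
      -- p i k ≥ 1/2 for all k ≥ T; then 1 - p grows geometrically
      set ε : ℝ := (1/(2*(N i).card))/2 with hε
      have hεpos : 0 < ε := by have := hncard i; positivity
      have grow : ∀ j : ℕ, (1 + ε)^j * (1 - p i T) ≤ 1 - p i (T + j) := by
        intro j
        induction j with
        | zero => simp
        | succ j ih =>
          have hge : 1/2 ≤ p i (T + j) := hex (T + j) (by omega)
          have hdec := key_dec i (T + j) hge (hcnt (T + j) (by omega))
          have h1p : 0 < 1 - p i (T + j) := by linarith [(hmem i (T+j)).2]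
          have : (1 + ε) * (1 - p i (T + j)) ≤ 1 - p i (T + j + 1) := by
            have : p i (T + j + 1) ≤ p i (T + j) - ε * (1 - p i (T + j)) := hdec
            nlinarith
          calc (1 + ε)^(j+1) * (1 - p i T) = (1 + ε) * ((1 + ε)^j * (1 - p i T)) := by ring
            _ ≤ (1 + ε) * (1 - p i (T + j)) := by
                apply mul_le_mul_of_nonneg_left ih (by linarith)
            _ ≤ 1 - p i (T + j + 1) := this
      have h1pT : 0 < 1 - p i T := by linarith [(hmem i T).2]
      obtain ⟨j, hj⟩ := pow_unbounded_of_one_lt (1 / (1 - p i T)) (by linarith : (1:ℝ) < 1 + ε)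
      have : 1 < (1 + ε)^j * (1 - p i T) := by
        rw [div_lt_iff₀ h1pT] at hj; linarith
      have := grow j
      have := (hmem i (T + j)).1
      linarith
  -- main induction: each cluster eventually has all opinions < 1/2
  have settle : ∀ h : ℕ, 1 ≤ h → h ≤ d →
      ∃ T : ℕ, (h = 1 → T = 0) ∧ ∀ k, T ≤ k → ∀ i ∈ A h, p i k < 1/2 := by
    intro h
    induction h with
    | zero => omega
    | succ g ih =>
      intro _ hle
      rcases Nat.eq_zero_or_pos g with hg0 | hg1
      · -- base cluster A 1
        subst hg0
        refine ⟨0, fun _ => rfl, ?_⟩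
        have inv : ∀ k, ∀ i ∈ A 1, p i k < 1/2 := by
          intro k
          induction k with
          | zero =>
            intro i hi
            by_contra hnot
            push_neg at hnot
            have hcond : ¬(p i 0 < 1 / 2 ∨ (p i 0 = 1 / 2 ∧ p i (0 - 1) < 1 / 2)) := by
              push_neg
              exact ⟨hnot, fun he => by simpa [he] using (not_lt.mpr hnot)⟩
            have := hq1 i 0 hcond
            rw [hA1zero i hi] at this
            omega
          | succ k ihk =>
            intro i hi
            apply key_lt i k (ihk i hi)
            have hz : ∀ j ∈ N i ∩ A 1, q j k = 0 := fun j hj =>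
              hq0 j k (Or.inl (ihk j (Finset.mem_inter.mp hj).2))
            have h1 := hsum_count i k (A 1) hz
            have h2 := hA1rob i hi
            have h3 := Finset.card_inter_add_card_sdiff (N i) (A 1)
            omega
        intro k _ i hi
        exact inv k i hi
      · -- cluster A (g+1), g ≥ 1
        obtain ⟨Tg, _, hTg⟩ := ih hg1 (by omega)
        have hper : ∀ i : Fin n, ∃ Ti : ℕ, i ∈ A (g+1) → ∀ k, Ti ≤ k → p i k < 1/2 := by
          intro i
          by_cases hi : i ∈ A (g+1)
          · have hstrict := hdiff g hg1 (by omega) i hi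
            have hcnt : ∀ k, Tg ≤ k → 2 * (∑ j ∈ N i, q j k) + 1 ≤ (N i).card := by
              intro k hk
              have hz : ∀ j ∈ N i ∩ A g, q j k = 0 := fun j hj =>
                hq0 j k (Or.inl (hTg k hk j (Finset.mem_inter.mp hj).2))
              have h1 := hsum_count i k (A g) hz
              have h3 := Finset.card_inter_add_card_sdiff (N i) (A g)
              omega
            obtain ⟨T', hT'⟩ := per_agent i Tg hcnt
            exact ⟨T', fun _ => hT'⟩
          · exact ⟨0, fun hmem' => absurd hmem' hi⟩
        choose f hf using hper
        refine ⟨Finset.univ.sup f, by omega, fun k hk i hi => ?_⟩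
        exact hf i hi k (le_trans (Finset.le_sup (Finset.mem_univ i)) hk)
  constructor
  · intro h h1 hle
    obtain ⟨T, hT0, hT⟩ := settle h h1 hle
    exact ⟨T, hT0, fun k hk i hi => hq0 i k (Or.inl (hT k hk i hi))⟩
  · rintro i ⟨h, h1, hle, hi⟩
    obtain ⟨T, _, hT⟩ := settle h h1 hle
    exact Filter.limsup_le_of_le
      (Filter.isCoboundedUnder_le_of_le Filter.atTop (f := fun k => p i k) (x := 0) (fun k => (hmem i k).1.le))
      (Filter.eventually_atTop.mpr ⟨T, fun k hk => le_of_lt (hT k hk i hi)⟩)
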